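/- Under condition H1, for every λ ∈ ℝ one has ψ_{α,t}(λ) → ψ_{α,C±}(λ) as t → 0+. -/

import Mathlib

open MeasureTheory Real Filter Set Topology

/-- The `α`-stable Lévy density with constants `Cp` (for `u > 0`) and `Cm` (for `u < 0`). -/
noncomputable def stableDensity (α Cp Cm : ℝ) (u : ℝ) : ℝ :=
  if 0 < u then Cp * |u| ^ (-α - 1) else Cm * |u| ^ (-α - 1)

/-- The characteristic exponent `ψ_{α,t}(λ)` of the rescaled locally stable process. -/
noncomputable def psiT (m : ℝ → ℝ) (α t lam : ℝ) : ℂ :=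
  (t : ℂ) * ∫ u : ℝ,
    (Complex.exp (Complex.I * ((lam * t ^ (-1 / α) * u : ℝ) : ℂ)) - 1 -
      Complex.I * ((lam * t ^ (-1 / α) * u : ℝ) : ℂ) *
        (if |u| ≤ t ^ (1 / α) then (1 : ℂ) else 0)) * ((m u : ℝ) : ℂ)

/-- The limiting `α`-stable characteristic exponent `ψ_{α,C±}(λ)`. -/
noncomputable def psiLimit (α Cp Cm lam : ℝ) : ℂ :=
  ∫ v : ℝ,
    (Complex.exp (Complex.I * ((lam * v : ℝ) : ℂ)) - 1 -
      Complex.I * ((lam * v : ℝ) : ℂ) * (if |v| ≤ 1 then (1 : ℂ) else 0)) *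
      ((stableDensity α Cp Cm v : ℝ) : ℂ)

noncomputable def Fker (lam : ℝ) (v : ℝ) : ℂ :=
  Complex.exp (Complex.I * ((lam * v : ℝ) : ℂ)) - 1 -
    Complex.I * ((lam * v : ℝ) : ℂ) * (if |v| ≤ 1 then (1 : ℂ) else 0)

lemma Fker_meas (lam : ℝ) : Measurable (Fker lam) := by
  unfold Fker
  refine ((Complex.continuous_exp.comp ((continuous_const.mul
    (Complex.continuous_ofReal.comp (continuous_const.mul continuous_id))))).measurable.sub
    measurable_const).sub ?_
  refine Measurable.mul ?_ ?_
  · exact (measurable_const.mul (Complex.measurable_ofReal.comp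
      ((measurable_const.mul measurable_id))))
  · exact Measurable.ite (measurableSet_le (continuous_abs.measurable) measurable_const)
      measurable_const measurable_const

lemma norm_exp_I_mul (x : ℝ) : ‖Complex.exp (Complex.I * (x : ℂ))‖ = 1 := by
  rw [mul_comm]
  exact Complex.norm_exp_ofReal_mul_I x

lemma Fker_norm_le' (lam v : ℝ) : ‖Fker lam v‖ ≤ 2 + |lam| := by
  unfold Fker
  by_cases h : |v| ≤ 1
  · rw [if_pos h, mul_one]
    refine (norm_sub_le _ _).trans ?_
    have h1 : ‖Complex.exp (Complex.I * ((lam * v : ℝ) : ℂ)) - 1‖ ≤ 2 := by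
      refine (norm_sub_le _ _).trans ?_
      rw [norm_exp_I_mul, norm_one]; norm_num
    have h2 : ‖Complex.I * ((lam * v : ℝ) : ℂ)‖ ≤ |lam| := by
      rw [norm_mul, Complex.norm_I, one_mul, Complex.norm_real, Real.norm_eq_abs, abs_mul]
      calc |lam| * |v| ≤ |lam| * 1 := by
            exact mul_le_mul_of_nonneg_left h (abs_nonneg _)
        _ = |lam| := mul_one _
    linarith
  · rw [if_neg h, mul_zero, sub_zero]
    refine (norm_sub_le _ _).trans ?_
    rw [norm_exp_I_mul, norm_one]
    have := abs_nonneg lam; linarith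

lemma Fker_norm_le (lam v : ℝ) :
    ‖Fker lam v‖ ≤ (2 + |lam|) * (1 + lam ^ 2) * min 1 (v ^ 2) := by
  have hl : (0:ℝ) ≤ |lam| := abs_nonneg _
  by_cases h : |v| ≤ 1
  · have hv2 : v ^ 2 ≤ 1 := by
      have := abs_nonneg v
      nlinarith [sq_abs v]
    rw [min_eq_right hv2]
    by_cases hx : |lam * v| ≤ 1
    · have key : ‖Fker lam v‖ ≤ (lam * v) ^ 2 := by
        unfold Fker
        rw [if_pos h, mul_one]
        have hz : ‖Complex.I * ((lam * v : ℝ) : ℂ)‖ ≤ 1 := by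
          rwa [norm_mul, Complex.norm_I, one_mul, Complex.norm_real, Real.norm_eq_abs]
        have := Complex.norm_exp_sub_one_sub_id_le hz
        rw [norm_mul, Complex.norm_I, one_mul, Complex.norm_real, Real.norm_eq_abs, sq_abs] at this
        exact this
      refine key.trans ?_
      have : (lam * v) ^ 2 = lam ^ 2 * v ^ 2 := by ring
      rw [this]
      have hv0 : (0:ℝ) ≤ v ^ 2 := sq_nonneg v
      nlinarith [sq_nonneg lam]
    · push_neg at hx
      have key : ‖Fker lam v‖ ≤ 2 + |lam| := Fker_norm_le' lam v
      refine key.trans ?_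
      have h1 : 1 ≤ (lam * v) ^ 2 := by nlinarith [sq_abs (lam * v)]
      have h2 : (lam * v) ^ 2 = lam ^ 2 * v ^ 2 := by ring
      have h3 : 1 ≤ (1 + lam ^ 2) * v ^ 2 := by nlinarith [sq_nonneg v]
      nlinarith [sq_nonneg lam, sq_nonneg v]
  · push_neg at h
    have h1 : (1:ℝ) ≤ v ^ 2 := by nlinarith [sq_abs v, abs_nonneg v]
    rw [min_eq_left h1]
    unfold Fker
    rw [if_neg (not_le.mpr h), mul_zero, sub_zero]
    refine (norm_sub_le _ _).trans ?_
    rw [norm_exp_I_mul, norm_one]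
    nlinarith [sq_nonneg lam]

lemma kernel_meas (α : ℝ) : Measurable (fun v : ℝ => min 1 (v ^ 2) * |v| ^ (-α - 1)) := by
  fun_prop

lemma kernel_integrable {α : ℝ} (hα0 : 0 < α) (hα2 : α < 2) :
    Integrable (fun v : ℝ => min 1 (v ^ 2) * |v| ^ (-α - 1)) := by
  set f : ℝ → ℝ := fun v => min 1 (v ^ 2) * |v| ^ (-α - 1) with hf
  have hmeas : Measurable f := kernel_meas α
  have hnonneg : ∀ v, 0 ≤ f v := by
    intro v
    apply mul_nonneg
    · exact le_min zero_le_one (sq_nonneg v)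
    · exact Real.rpow_nonneg (abs_nonneg v) _
  -- Integrable on Ioc 0 1
  have h1 : IntegrableOn f (Ioc 0 1) := by
    have hbase : IntegrableOn (fun v : ℝ => v ^ (1 - α)) (Ioc 0 1) := by
      have := (intervalIntegral.intervalIntegrable_rpow' (a := 0) (b := 1)
        (r := 1 - α) (by linarith)).1
      simpa using this
    refine Integrable.mono' hbase (hmeas.aestronglyMeasurable.restrict) ?_
    rw [ae_restrict_iff' measurableSet_Ioc]
    refine Filter.Eventually.of_forall fun v hv => ?_
    obtain ⟨hv0, hv1⟩ := hv
    rw [Real.norm_eq_abs, abs_of_nonneg (hnonneg v)]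
    have habs : |v| = v := abs_of_pos hv0
    have : f v ≤ v ^ 2 * v ^ (-α - 1) := by
      rw [hf]; simp only [habs]
      exact mul_le_mul_of_nonneg_right (min_le_right _ _) (Real.rpow_nonneg hv0.le _)
    refine this.trans_eq ?_
    rw [← Real.rpow_two, ← Real.rpow_add hv0]
    congr 1; ring
  -- Integrable on Ioi 1
  have h2 : IntegrableOn f (Ioi 1) := by
    have hbase : IntegrableOn (fun v : ℝ => v ^ (-α - 1)) (Ioi 1) :=
      integrableOn_Ioi_rpow_of_lt (by linarith) one_pos
    refine Integrable.mono' hbase (hmeas.aestronglyMeasurable.restrict) ?_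
    rw [ae_restrict_iff' measurableSet_Ioi]
    refine Filter.Eventually.of_forall fun v hv => ?_
    rw [Real.norm_eq_abs, abs_of_nonneg (hnonneg v)]
    have hv0 : (0:ℝ) < v := lt_trans one_pos hv
    have habs : |v| = v := abs_of_pos hv0
    rw [hf]; simp only [habs]
    exact mul_le_of_le_one_left (Real.rpow_nonneg hv0.le _) (min_le_left _ _)
  have hIoi : IntegrableOn f (Ioi 0) := by
    rw [← Ioc_union_Ioi_eq_Ioi (zero_le_one)]
    exact h1.union h2
  have heven : ∀ v, f (-v) = f v := by
    intro v; rw [hf]; simp [neg_sq]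
  have hIio : IntegrableOn f (Iio 0) := by
    have h1 : Integrable (Set.indicator (Ioi (0:ℝ)) f) :=
      (integrable_indicator_iff measurableSet_Ioi).mpr hIoi
    have h2 : Integrable (fun v => Set.indicator (Ioi (0:ℝ)) f (-v)) := h1.comp_neg
    have h3 : (fun v => Set.indicator (Ioi (0:ℝ)) f (-v)) = Set.indicator (Iio (0:ℝ)) f := by
      funext v
      by_cases hv : v < 0
      · rw [Set.indicator_of_mem (by simpa using hv : -v ∈ Ioi (0:ℝ)),
          Set.indicator_of_mem (by simpa using hv), heven]
      · rw [Set.indicator_of_notMem (by simpa using hv),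
          Set.indicator_of_notMem (by simpa using hv)]
    rw [h3] at h2
    exact (integrable_indicator_iff measurableSet_Iio).mp h2
  have hunion : IntegrableOn f (Iio 0 ∪ Ioi 0) := hIio.union hIoi
  have : IntegrableOn f univ := by
    refine hunion.congr_set_ae ?_
    rw [Iio_union_Ioi]
    symm
    rw [Filter.eventuallyEq_set]
    have h0 : ∀ᵐ v : ℝ, v ≠ 0 := by
      rw [ae_iff]
      simp
    filter_upwards [h0] with v hv
    simp [hv]
  rwa [integrableOn_univ] at this

lemma tendsto_rpow_nhdsWithin {α : ℝ} (hα0 : 0 < α) :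
    Tendsto (fun t : ℝ => t ^ (1/α)) (𝓝[>] 0) (𝓝[>] 0) := by
  rw [tendsto_nhdsWithin_iff]
  constructor
  · have hc : ContinuousAt (fun t : ℝ => t ^ (1/α)) 0 :=
      Real.continuousAt_rpow_const 0 (1/α) (Or.inr (by positivity))
    have := hc.tendsto
    rw [Real.zero_rpow (by positivity : (1:ℝ)/α ≠ 0)] at this
    exact this.mono_left nhdsWithin_le_nhds
  · filter_upwards [self_mem_nhdsWithin] with t ht
    exact Real.rpow_pos_of_pos ht _

lemma tendsto_neg_rpow_atTop {α : ℝ} (hα0 : 0 < α) :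
    Tendsto (fun t : ℝ => t ^ (-1/α)) (𝓝[>] 0) atTop := by
  have h := tendsto_inv_nhdsGT_zero.comp (tendsto_rpow_nhdsWithin hα0)
  refine h.congr' ?_
  filter_upwards [self_mem_nhdsWithin] with t ht
  rw [Function.comp_apply, ← Real.rpow_neg (le_of_lt ht), neg_div]

lemma exists_delta (α Cp Cm : ℝ) (m : ℝ → ℝ)
    (hlimp : Tendsto (fun u => u ^ (α + 1) * m u) (𝓝[>] (0 : ℝ)) (𝓝 Cp))
    (hlimm : Tendsto (fun u => |u| ^ (α + 1) * m u) (𝓝[<] (0 : ℝ)) (𝓝 Cm)) :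
    ∃ δ : ℝ, 0 < δ ∧ δ ≤ 1 ∧
      ∀ u : ℝ, u ≠ 0 → |u| ≤ δ → |u| ^ (α + 1) * m u ≤ max Cp Cm + 1 := by
  have hp : ∀ᶠ u in 𝓝[>] (0:ℝ), u ^ (α + 1) * m u < max Cp Cm + 1 :=
    hlimp.eventually_lt_const (by
      have := le_max_left Cp Cm; linarith)
  have hm : ∀ᶠ u in 𝓝[<] (0:ℝ), |u| ^ (α + 1) * m u < max Cp Cm + 1 :=
    hlimm.eventually_lt_const (by
      have := le_max_right Cp Cm; linarith)
  rw [eventually_nhdsWithin_iff, Metric.eventually_nhds_iff] at hp hm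
  obtain ⟨ε₁, hε₁, h₁⟩ := hp
  obtain ⟨ε₂, hε₂, h₂⟩ := hm
  refine ⟨min 1 (min (ε₁ / 2) (ε₂ / 2)), by positivity, min_le_left _ _, ?_⟩
  intro u hu0 hu
  rcases lt_or_gt_of_ne hu0 with hneg | hpos
  · have habs : |u| = -u := abs_of_neg hneg
    have hd : dist u 0 < ε₂ := by
      rw [Real.dist_eq, sub_zero]
      calc |u| ≤ min 1 (min (ε₁ / 2) (ε₂ / 2)) := hu
        _ ≤ ε₂ / 2 := le_trans (min_le_right _ _) (min_le_right _ _)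
        _ < ε₂ := by linarith
    exact le_of_lt (h₂ hd hneg)
  · have hd : dist u 0 < ε₁ := by
      rw [Real.dist_eq, sub_zero]
      calc |u| ≤ min 1 (min (ε₁ / 2) (ε₂ / 2)) := hu
        _ ≤ ε₁ / 2 := le_trans (min_le_right _ _) (min_le_left _ _)
        _ < ε₁ := by linarith
    have := le_of_lt (h₁ hd hpos)
    rwa [abs_of_pos hpos]

lemma psiT_change (m : ℝ → ℝ) (α : ℝ) (hα0 : 0 < α) (lam t : ℝ) (ht : 0 < t) :
    psiT m α t lam
      = ∫ v : ℝ, Fker lam v * ((t ^ (1 + 1/α) * m (t ^ (1/α) * v) : ℝ) : ℂ) := by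
  have ha : (0:ℝ) < t ^ (1/α) := Real.rpow_pos_of_pos ht _
  have hinv : t ^ (-1/α) = (t ^ (1/α))⁻¹ := by
    rw [← Real.rpow_neg ht.le, neg_div]
  have h1 : ∀ v : ℝ, lam * t ^ (-1/α) * (t ^ (1/α) * v) = lam * v := by
    intro v; rw [hinv]; field_simp
  have h2 : ∀ v : ℝ, (|t ^ (1/α) * v| ≤ t ^ (1/α)) = (|v| ≤ 1) := by
    intro v
    rw [abs_mul, abs_of_pos ha, eq_iff_iff]
    exact mul_le_iff_le_one_right ha
  have hcv := MeasureTheory.Measure.integral_comp_mul_left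
    (g := fun u : ℝ =>
      (Complex.exp (Complex.I * ((lam * t ^ (-1 / α) * u : ℝ) : ℂ)) - 1 -
        Complex.I * ((lam * t ^ (-1 / α) * u : ℝ) : ℂ) *
          (if |u| ≤ t ^ (1 / α) then (1 : ℂ) else 0)) * ((m u : ℝ) : ℂ))
    (a := t ^ (1/α))
  simp only [h1, h2] at hcv
  -- hcv : ∫ x, Fker-shape (x) * m (t^(1/α) x) = |(t^(1/α))⁻¹| • ∫ u, (original integrand)
  rw [psiT]
  have habs : |(t ^ (1/α) : ℝ)⁻¹| = (t ^ (1/α))⁻¹ := abs_of_pos (by positivity)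
  rw [habs] at hcv
  have hta : t ^ (1 + 1/α) * (t ^ (1/α))⁻¹ = t := by
    rw [← hinv, ← Real.rpow_add ht]
    ring_nf
    exact Real.rpow_one t
  calc (t:ℂ) * ∫ u : ℝ,
      (Complex.exp (Complex.I * ((lam * t ^ (-1 / α) * u : ℝ) : ℂ)) - 1 -
        Complex.I * ((lam * t ^ (-1 / α) * u : ℝ) : ℂ) *
          (if |u| ≤ t ^ (1 / α) then (1 : ℂ) else 0)) * ((m u : ℝ) : ℂ)
      = ((t ^ (1 + 1/α) : ℝ) : ℂ) * ((((t ^ (1/α) : ℝ)⁻¹ : ℝ)) •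
          ∫ u : ℝ, (Complex.exp (Complex.I * ((lam * t ^ (-1 / α) * u : ℝ) : ℂ)) - 1 -
            Complex.I * ((lam * t ^ (-1 / α) * u : ℝ) : ℂ) *
              (if |u| ≤ t ^ (1 / α) then (1 : ℂ) else 0)) * ((m u : ℝ) : ℂ)) := by
        rw [Complex.real_smul, ← mul_assoc, ← Complex.ofReal_mul, hta]
    _ = ((t ^ (1 + 1/α) : ℝ) : ℂ) * ∫ v : ℝ,
          (Complex.exp (Complex.I * ((lam * v : ℝ) : ℂ)) - 1 -
            Complex.I * ((lam * v : ℝ) : ℂ) * (if |v| ≤ 1 then (1 : ℂ) else 0)) *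
            ((m (t ^ (1/α) * v) : ℝ) : ℂ) := by rw [← hcv]
    _ = ∫ v : ℝ, Fker lam v * ((t ^ (1 + 1/α) * m (t ^ (1/α) * v) : ℝ) : ℂ) := by
        rw [← MeasureTheory.integral_const_mul]
        congr 1; funext v
        rw [Fker]; push_cast; ring

/-- Under condition H1, for every `λ ∈ ℝ`, `ψ_{α,t}(λ) → ψ_{α,C±}(λ)` as `t → 0+`. -/
theorem statement0 (α Cp Cm : ℝ) (hα : α ∈ Set.Ioo (0 : ℝ) 2)
    (hCp0 : 0 ≤ Cp) (hCm0 : 0 ≤ Cm) (hC : 0 < Cp + Cm)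
    (m : ℝ → ℝ) (hm_meas : Measurable m) (hm_nonneg : ∀ u, 0 ≤ m u)
    (hm_int : Integrable (fun u => min 1 (u ^ 2) * m u))
    (hlimp : Tendsto (fun u => u ^ (α + 1) * m u) (𝓝[>] (0 : ℝ)) (𝓝 Cp))
    (hlimm : Tendsto (fun u => |u| ^ (α + 1) * m u) (𝓝[<] (0 : ℝ)) (𝓝 Cm))
    (lam : ℝ) :
    Tendsto (fun t => psiT m α t lam) (𝓝[>] (0 : ℝ)) (𝓝 (psiLimit α Cp Cm lam)) := by
  obtain ⟨hα0, hα2⟩ := hα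
  have hKmax : (0:ℝ) ≤ max Cp Cm := le_trans hCp0 (le_max_left _ _)
  set K : ℝ := max Cp Cm + 1 with hK
  have hK0 : 0 < K := by rw [hK]; linarith
  obtain ⟨δ, hδ0, hδ1, hδ⟩ := exists_delta α Cp Cm m hlimp hlimm
  set C₀ : ℝ := (2 + |lam|) * (1 + lam ^ 2) with hC₀def
  have hC₀ : 0 ≤ C₀ := by positivity
  set g : ℝ → ℝ → ℝ := fun t v => t ^ (1 + 1/α) * m (t ^ (1/α) * v) with hg
  have hane : ∀ t : ℝ, 0 < t → (0:ℝ) < t ^ (1/α) := fun t ht => Real.rpow_pos_of_pos ht _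
  have hinv : ∀ t : ℝ, 0 < t → t ^ (-1/α) = (t ^ (1/α))⁻¹ := by
    intro t ht; rw [← Real.rpow_neg ht.le, neg_div]
  -- the rpow identity
  have hrpow_id : ∀ t : ℝ, 0 < t → ∀ v : ℝ, v ≠ 0 →
      t ^ (1 + 1/α) = |t ^ (1/α) * v| ^ (α + 1) * |v| ^ (-α - 1) := by
    intro t ht v hv
    rw [abs_mul, abs_of_pos (hane t ht),
      Real.mul_rpow (hane t ht).le (abs_nonneg v), mul_assoc,
      ← Real.rpow_add (abs_pos.mpr hv)]
    have e1 : α + 1 + (-α - 1) = 0 := by ring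
    rw [e1, Real.rpow_zero, mul_one, ← Real.rpow_mul ht.le]
    congr 1
    field_simp
  have hg_nonneg : ∀ t : ℝ, 0 < t → ∀ v, 0 ≤ g t v := fun t ht v =>
    mul_nonneg (Real.rpow_nonneg ht.le _) (hm_nonneg _)
  -- bound on g in the good region
  have hg_le : ∀ t : ℝ, 0 < t → ∀ v : ℝ, v ≠ 0 → |v| ≤ δ * t ^ (-1/α) →
      g t v ≤ K * |v| ^ (-α - 1) := by
    intro t ht v hv hvle
    have ha := hane t ht
    have hu0 : t ^ (1/α) * v ≠ 0 := mul_ne_zero ha.ne' hv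
    have hcancel : t ^ (1/α) * t ^ (-1/α) = 1 := by
      have he : 1/α + -1/α = 0 := by ring
      rw [← Real.rpow_add ht, he, Real.rpow_zero]
    have huδ : |t ^ (1/α) * v| ≤ δ := by
      rw [abs_mul, abs_of_pos ha]
      calc t ^ (1/α) * |v| ≤ t ^ (1/α) * (δ * t ^ (-1/α)) :=
            mul_le_mul_of_nonneg_left hvle ha.le
        _ = δ * (t ^ (1/α) * t ^ (-1/α)) := by ring
        _ = δ := by rw [hcancel]; ring
    have hb := hδ _ hu0 huδ
    have : g t v = |t ^ (1/α) * v| ^ (α + 1) * m (t ^ (1/α) * v) * |v| ^ (-α - 1) := by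
      rw [hg]; dsimp only; rw [hrpow_id t ht v hv]; ring
    rw [this]
    exact mul_le_mul_of_nonneg_right hb (Real.rpow_nonneg (abs_nonneg v) _)
  -- define A and B
  set A : ℝ → ℝ → ℂ := fun t v =>
    if |v| ≤ δ * t ^ (-1/α) then Fker lam v * ((g t v : ℝ) : ℂ) else 0 with hA
  set B : ℝ → ℝ → ℂ := fun t v =>
    if |v| ≤ δ * t ^ (-1/α) then 0 else Fker lam v * ((g t v : ℝ) : ℂ) with hB
  have hAB : ∀ t v, Fker lam v * ((g t v : ℝ) : ℂ) = A t v + B t v := by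
    intro t v; rw [hA, hB]; dsimp only
    by_cases h : |v| ≤ δ * t ^ (-1/α) <;> simp [h]
  -- measurability
  have hgv_meas : ∀ t : ℝ, Measurable (g t) := by
    intro t
    exact measurable_const.mul (hm_meas.comp (measurable_id.const_mul _))
  have hFg_meas : ∀ t : ℝ, Measurable (fun v => Fker lam v * ((g t v : ℝ) : ℂ)) := by
    intro t
    exact (Fker_meas lam).mul (Complex.measurable_ofReal.comp (hgv_meas t))
  have hsetmeas : ∀ c : ℝ, MeasurableSet {v : ℝ | |v| ≤ c} := fun c =>
    measurableSet_le measurable_abs measurable_const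
  have hA_meas : ∀ t : ℝ, Measurable (A t) := by
    intro t
    exact Measurable.ite (hsetmeas _) (hFg_meas t) measurable_const
  have hB_meas : ∀ t : ℝ, Measurable (B t) := by
    intro t
    exact Measurable.ite (hsetmeas _) measurable_const (hFg_meas t)
  have h0ae : ∀ᵐ v : ℝ, v ≠ 0 := by rw [ae_iff]; simp
  -- dominating function
  set G : ℝ → ℝ := fun v => C₀ * K * (min 1 (v ^ 2) * |v| ^ (-α - 1)) with hG
  have hG_int : Integrable G := (kernel_integrable hα0 hα2).const_mul _
  have hA_bound : ∀ t : ℝ, 0 < t → ∀ v : ℝ, v ≠ 0 → ‖A t v‖ ≤ G v := by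
    intro t ht v hv
    have h3 : (0:ℝ) ≤ min 1 (v ^ 2) := le_min zero_le_one (sq_nonneg v)
    have h4 : (0:ℝ) ≤ |v| ^ (-α - 1) := Real.rpow_nonneg (abs_nonneg v) _
    have hGnonneg : 0 ≤ G v := by
      rw [hG]; dsimp only; positivity
    rw [hA]; dsimp only
    by_cases h : |v| ≤ δ * t ^ (-1/α)
    · rw [if_pos h, norm_mul, Complex.norm_real, Real.norm_eq_abs,
        abs_of_nonneg (hg_nonneg t ht v)]
      have h1 := Fker_norm_le lam v
      have h2 := hg_le t ht v hv h
      calc ‖Fker lam v‖ * g t v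
          ≤ ((2 + |lam|) * (1 + lam ^ 2) * min 1 (v ^ 2)) * (K * |v| ^ (-α - 1)) := by
            refine mul_le_mul h1 h2 (hg_nonneg t ht v) ?_
            positivity
        _ = G v := by rw [hG, hC₀def]; dsimp only; ring
    · rw [if_neg h, norm_zero]; exact hGnonneg
  have hA_int : ∀ t : ℝ, 0 < t → Integrable (A t) := by
    intro t ht
    refine Integrable.mono' hG_int (hA_meas t).aestronglyMeasurable ?_
    filter_upwards [h0ae] with v hv
    exact hA_bound t ht v hv
  -- pointwise limit of g
  have hg_lim : ∀ v : ℝ, v ≠ 0 →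
      Tendsto (fun t => g t v) (𝓝[>] (0:ℝ)) (𝓝 (stableDensity α Cp Cm v)) := by
    intro v hv
    have hbase : ∀ t : ℝ, 0 < t →
        g t v = |t ^ (1/α) * v| ^ (α + 1) * m (t ^ (1/α) * v) * |v| ^ (-α - 1) := by
      intro t ht
      rw [hg]; dsimp only; rw [hrpow_id t ht v hv]; ring
    rcases lt_or_gt_of_ne hv with hvneg | hvpos
    · -- v < 0, use hlimm
      have hmap : Tendsto (fun t : ℝ => t ^ (1/α) * v) (𝓝[>] (0:ℝ)) (𝓝[<] (0:ℝ)) := by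
        rw [tendsto_nhdsWithin_iff]
        constructor
        · have h1 := ((tendsto_rpow_nhdsWithin hα0).mono_right
            nhdsWithin_le_nhds).mul_const v
          simpa using h1
        · filter_upwards [self_mem_nhdsWithin] with t ht
          exact mul_neg_of_pos_of_neg (hane t ht) hvneg
      have hcomp := (hlimm.comp hmap).mul_const (|v| ^ (-α - 1))
      have hsd : stableDensity α Cp Cm v = Cm * |v| ^ (-α - 1) := by
        rw [stableDensity, if_neg (not_lt.mpr hvneg.le)]
      rw [hsd]
      refine hcomp.congr' ?_
      filter_upwards [self_mem_nhdsWithin] with t ht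
      simp only [Function.comp_apply]
      exact (hbase t ht).symm
    · -- v > 0, use hlimp
      have habs : Tendsto (fun u : ℝ => |u| ^ (α + 1) * m u) (𝓝[>] (0:ℝ)) (𝓝 Cp) := by
        refine hlimp.congr' ?_
        filter_upwards [self_mem_nhdsWithin] with u hu
        rw [abs_of_pos hu]
      have hmap : Tendsto (fun t : ℝ => t ^ (1/α) * v) (𝓝[>] (0:ℝ)) (𝓝[>] (0:ℝ)) := by
        rw [tendsto_nhdsWithin_iff]
        constructor
        · have h1 := ((tendsto_rpow_nhdsWithin hα0).mono_right
            nhdsWithin_le_nhds).mul_const v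
          simpa using h1
        · filter_upwards [self_mem_nhdsWithin] with t ht
          exact mul_pos (hane t ht) hvpos
      have hcomp := (habs.comp hmap).mul_const (|v| ^ (-α - 1))
      have hsd : stableDensity α Cp Cm v = Cp * |v| ^ (-α - 1) := by
        rw [stableDensity, if_pos hvpos]
      rw [hsd]
      refine hcomp.congr' ?_
      filter_upwards [self_mem_nhdsWithin] with t ht
      simp only [Function.comp_apply]
      exact (hbase t ht).symm
  -- pointwise limit of A
  have hA_lim : ∀ v : ℝ, v ≠ 0 →
      Tendsto (fun t => A t v) (𝓝[>] (0:ℝ))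
        (𝓝 (Fker lam v * ((stableDensity α Cp Cm v : ℝ) : ℂ))) := by
    intro v hv
    have hev : ∀ᶠ t in 𝓝[>] (0:ℝ), A t v = Fker lam v * ((g t v : ℝ) : ℂ) := by
      filter_upwards [(tendsto_neg_rpow_atTop hα0).eventually_ge_atTop (|v| / δ)]
        with t ht
      rw [hA]; dsimp only
      rw [if_pos]
      rw [← div_le_iff₀' hδ0]
      exact ht
    have hlim := ((Complex.continuous_ofReal.tendsto _).comp (hg_lim v hv)).const_mul
      (Fker lam v)
    refine hlim.congr' ?_
    filter_upwards [hev] with t htv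
    simp only [Function.comp_apply]
    exact htv.symm
  -- DCT for A
  have hTendA : Tendsto (fun t => ∫ v, A t v) (𝓝[>] (0:ℝ))
      (𝓝 (psiLimit α Cp Cm lam)) := by
    have hpsiL : psiLimit α Cp Cm lam
        = ∫ v : ℝ, Fker lam v * ((stableDensity α Cp Cm v : ℝ) : ℂ) := rfl
    rw [hpsiL]
    refine tendsto_integral_filter_of_dominated_convergence G ?_ ?_ hG_int ?_
    · filter_upwards [self_mem_nhdsWithin] with t ht
      exact (hA_meas t).aestronglyMeasurable
    · filter_upwards [self_mem_nhdsWithin] with t ht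
      filter_upwards [h0ae] with v hv
      exact hA_bound t ht v hv
    · filter_upwards [h0ae] with v hv
      exact hA_lim v hv
  -- the B part
  have hIδ_int : Integrable (fun u : ℝ => if |u| ≤ δ then (0:ℝ) else m u) := by
    refine Integrable.mono' (hm_int.const_mul (δ⁻¹ ^ 2))
      ((Measurable.ite (hsetmeas δ) measurable_const hm_meas).aestronglyMeasurable) ?_
    refine Filter.Eventually.of_forall fun u => ?_
    by_cases h : |u| ≤ δ
    · rw [if_pos h, norm_zero]
      have h1 : (0:ℝ) ≤ min 1 (u ^ 2) := le_min zero_le_one (sq_nonneg u)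
      have := hm_nonneg u
      positivity
    · rw [if_neg h, Real.norm_eq_abs, abs_of_nonneg (hm_nonneg u)]
      push_neg at h
      have hM : δ ^ 2 ≤ min 1 (u ^ 2) := by
        refine le_min ?_ ?_
        · nlinarith
        · nlinarith [sq_abs u, abs_nonneg u]
      have h1 : (1:ℝ) ≤ δ⁻¹ ^ 2 * min 1 (u ^ 2) := by
        have h2 : δ⁻¹ ^ 2 * δ ^ 2 ≤ δ⁻¹ ^ 2 * min 1 (u ^ 2) :=
          mul_le_mul_of_nonneg_left hM (by positivity)
        have h3 : δ⁻¹ ^ 2 * δ ^ 2 = 1 := by field_simp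
        linarith
      nlinarith [hm_nonneg u]
  set Iδ : ℝ := ∫ u : ℝ, (if |u| ≤ δ then (0:ℝ) else m u) with hIδ
  have hIδ0 : 0 ≤ Iδ := by
    rw [hIδ]
    refine integral_nonneg fun u => ?_
    dsimp only; split
    · exact le_refl 0
    · exact hm_nonneg u
  have hB_key : ∀ t : ℝ, 0 < t →
      Integrable (B t) ∧ ‖∫ v, B t v‖ ≤ (2 + |lam|) * Iδ * t := by
    intro t ht
    have ha := hane t ht
    have hiff : ∀ v : ℝ, (|v| ≤ δ * t ^ (-1/α)) ↔ (|t ^ (1/α) * v| ≤ δ) := by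
      intro v
      rw [abs_mul, abs_of_pos ha, hinv t ht, ← div_eq_mul_inv,
        le_div_iff₀ ha, mul_comm (|v|) (t ^ (1/α))]
    set h : ℝ → ℝ := fun v => if |v| ≤ δ * t ^ (-1/α) then 0 else g t v with hh
    have hh_eq : h = fun v =>
        if |t ^ (1/α) * v| ≤ δ then (0:ℝ) else t ^ (1 + 1/α) * m (t ^ (1/α) * v) := by
      funext v; rw [hh]; dsimp only; exact if_congr (hiff v) rfl rfl
    have hHt_int : Integrable
        (fun u : ℝ => if |u| ≤ δ then (0:ℝ) else t ^ (1 + 1/α) * m u) := by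
      have h1 := hIδ_int.const_mul (t ^ (1 + 1/α))
      refine h1.congr ?_
      refine Filter.Eventually.of_forall fun u => ?_
      by_cases hc : |u| ≤ δ <;> simp [hc]
    have hh_int : Integrable h := by
      rw [hh_eq]
      exact hHt_int.comp_mul_left' ha.ne'
    have hh_nonneg : ∀ v, 0 ≤ h v := by
      intro v; rw [hh]; dsimp only; split
      · exact le_refl 0
      · exact hg_nonneg t ht v
    have hint_h : ∫ v, h v = t * Iδ := by
      rw [hh_eq]
      have hcv := MeasureTheory.Measure.integral_comp_mul_left
        (g := fun u : ℝ => if |u| ≤ δ then (0:ℝ) else t ^ (1 + 1/α) * m u)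
        (a := t ^ (1/α))
      rw [hcv, abs_of_pos (inv_pos.mpr ha), smul_eq_mul]
      have hsplit : (∫ u : ℝ, (if |u| ≤ δ then (0:ℝ) else t ^ (1 + 1/α) * m u))
          = t ^ (1 + 1/α) * Iδ := by
        rw [hIδ, ← integral_const_mul]
        congr 1; funext u
        by_cases hc : |u| ≤ δ <;> simp [hc]
      rw [hsplit, ← mul_assoc]
      congr 1
      have he : -1/α + (1 + 1/α) = 1 := by ring
      rw [← hinv t ht, ← Real.rpow_add ht, he, Real.rpow_one]
    have hBb : ∀ v, ‖B t v‖ ≤ (2 + |lam|) * h v := by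
      intro v; rw [hB, hh]; dsimp only
      by_cases hc : |v| ≤ δ * t ^ (-1/α)
      · rw [if_pos hc, if_pos hc, norm_zero, mul_zero]
      · rw [if_neg hc, if_neg hc, norm_mul, Complex.norm_real, Real.norm_eq_abs,
          abs_of_nonneg (hg_nonneg t ht v)]
        exact mul_le_mul_of_nonneg_right (Fker_norm_le' lam v) (hg_nonneg t ht v)
    have hB_int : Integrable (B t) := by
      refine Integrable.mono' (hh_int.const_mul (2 + |lam|))
        (hB_meas t).aestronglyMeasurable ?_
      exact Filter.Eventually.of_forall hBb
    refine ⟨hB_int, ?_⟩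
    calc ‖∫ v, B t v‖ ≤ ∫ v, (2 + |lam|) * h v :=
          norm_integral_le_of_norm_le (hh_int.const_mul _)
            (Filter.Eventually.of_forall hBb)
      _ = (2 + |lam|) * (t * Iδ) := by rw [integral_const_mul, hint_h]
      _ = (2 + |lam|) * Iδ * t := by ring
  have hTendB : Tendsto (fun t => ∫ v, B t v) (𝓝[>] (0:ℝ)) (𝓝 0) := by
    refine squeeze_zero_norm' (a := fun t : ℝ => (2 + |lam|) * Iδ * t) ?_ ?_
    · filter_upwards [self_mem_nhdsWithin] with t ht
      exact (hB_key t ht).2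
    · have h1 : Tendsto (fun t : ℝ => (2 + |lam|) * Iδ * t) (𝓝 (0:ℝ))
          (𝓝 ((2 + |lam|) * Iδ * 0)) := (continuous_const.mul continuous_id).tendsto 0
      rw [mul_zero] at h1
      exact h1.mono_left nhdsWithin_le_nhds
  -- combine
  have hfinal := hTendA.add hTendB
  rw [add_zero] at hfinal
  refine hfinal.congr' ?_
  filter_upwards [self_mem_nhdsWithin] with t ht
  rw [psiT_change m α hα0 lam t ht]
  have hptwise : (fun v => Fker lam v * ((t ^ (1 + 1/α) * m (t ^ (1/α) * v) : ℝ) : ℂ))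
      = fun v => A t v + B t v := by
    funext v
    exact hAB t v
  rw [hptwise, integral_add (hA_int t ht) (hB_key t ht).1]
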